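/- In the universal length-two setting, with c = (x+vt, −y, −z, −t) the first row of Φ and with matrices a, b as above, the rows of Φ are given by: row 2 of Φ equals c·a, row 3 equals c·b, and row 4 equals −c·a·b. -/
import Mathlib

open MvPolynomial

noncomputable section

abbrev S8 : Type := MvPolynomial (Fin 7) ℂ

def x8 : S8 := X 0
def y8 : S8 := X 1
def z8 : S8 := X 2
def w8 : S8 := X 3
def u8 : S8 := X 4
def v8 : S8 := X 5
def t8 : S8 := X 6

def Xi8 : Matrix (Fin 4) (Fin 4) S8 :=
  !![-v8*t8, y8, z8, t8;
     -u8*y8 - 2*v8*z8, v8*t8, -u8*t8, z8;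
     -w8*z8, w8*t8, -v8*t8, -y8;
     -u8*w8*t8, -w8*z8, u8*y8 + 2*v8*z8, v8*t8]

def Phi8 : Matrix (Fin 4) (Fin 4) S8 := x8 • (1 : Matrix (Fin 4) (Fin 4) S8) - Xi8

def a8 : Matrix (Fin 4) (Fin 4) S8 :=
  !![0, 1, 0, 0; -u8, 0, 0, 0; -2*v8, 0, 0, 1; 0, 2*v8, -u8, 0]

def b8 : Matrix (Fin 4) (Fin 4) S8 :=
  !![0, 0, 1, 0; 0, 0, 0, -1; -w8, 0, 0, 0; 0, w8, 0, 0]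

def c8 : Fin 4 → S8 := ![x8 + v8*t8, -y8, -z8, -t8]

set_option maxHeartbeats 2000000 in
theorem rows_of_Phi_from_c :
    (fun j => Phi8 1 j) = Matrix.vecMul c8 a8 ∧
    (fun j => Phi8 2 j) = Matrix.vecMul c8 b8 ∧
    (fun j => Phi8 3 j) = -(Matrix.vecMul (Matrix.vecMul c8 a8) b8) := by
  refine ⟨?_, ?_, ?_⟩ <;> funext j <;> fin_cases j <;>
    simp [Phi8, Xi8, a8, b8, c8, Matrix.vecMul, Matrix.one_apply, dotProduct,
      Fin.sum_univ_four, Matrix.vecHead, Matrix.vecTail] <;> ring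

end
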